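/- For a graph manifold M over T_pM with second-order Taylor coefficients κ^j_{αβ} at the origin, the boundary of the intersection of M with the sphere of radius ε centered at p has radial parametric equation r(x̄) = ε − (K(x̄)²/8) ε³ + O(ε⁴), where K(x̄)² = Σ_{i=1}^k ( Σ_{α,β} κ^i_{αβ} x̄^α x̄^β )² = ‖II(x̄,x̄)‖² for unit tangent vectors x̄ ∈ S^{n-1} ⊂ T_pM. -/

import Mathlib

open Filter Asymptotics

lemma cube_bound {u : ℝ → ℝ} (hu : ContDiff ℝ 3 u) (h0 : u 0 = 0)
    (h1 : deriv u 0 = 0) (h2 : deriv (deriv u) 0 = 0) :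
    ∃ C > 0, ∃ δ > 0, ∀ t : ℝ, |t| ≤ δ → |u t| ≤ C * |t| ^ 3 := by
  have h3 : (3 : WithTop ℕ∞) = 2 + 1 := by norm_num
  have hu1 : Differentiable ℝ u ∧ ContDiff ℝ 2 (deriv u) := by
    rw [h3, contDiff_succ_iff_deriv] at hu
    exact ⟨hu.1, hu.2.2⟩
  have h21 : (2 : WithTop ℕ∞) = 1 + 1 := by norm_num
  have hu2 : Differentiable ℝ (deriv u) ∧ ContDiff ℝ 1 (deriv (deriv u)) := by
    have := hu1.2
    rw [h21, contDiff_succ_iff_deriv] at this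
    exact ⟨this.1, this.2.2⟩
  obtain ⟨K, s, hs, hlip⟩ := (hu2.2.contDiffAt (x := 0)).exists_lipschitzOnWith
  obtain ⟨δ, hδ, hball⟩ := Metric.mem_nhds_iff.mp hs
  refine ⟨(K : ℝ) + 1, by positivity, δ / 2, by positivity, ?_⟩
  have hKK : (0:ℝ) ≤ (K:ℝ) + 1 := by positivity
  have hbd2 : ∀ x : ℝ, |x| ≤ δ / 2 → |deriv (deriv u) x| ≤ ((K:ℝ)+1) * |x| := by
    intro x hx
    have hxmem : x ∈ s := hball (by simp [Real.ball_eq_Ioo] at *; constructor <;> nlinarith [abs_le.mp hx])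
    have h0mem : (0:ℝ) ∈ s := hball (by simp [hδ])
    have := hlip.norm_sub_le hxmem h0mem
    simp only [h2, sub_zero, Real.norm_eq_abs] at this
    calc |deriv (deriv u) x| ≤ K * |x| := this
      _ ≤ ((K:ℝ)+1) * |x| := by nlinarith [abs_nonneg x, K.coe_nonneg]
  have hbd1 : ∀ t : ℝ, |t| ≤ δ / 2 → |deriv u t| ≤ ((K:ℝ)+1) * |t| ^ 2 := by
    intro t ht
    have := Convex.norm_image_sub_le_of_norm_hasDerivWithin_le
      (f := deriv u) (f' := deriv (deriv u)) (s := Set.uIcc 0 t) (C := ((K:ℝ)+1) * |t|)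
      (fun x _ => ((hu2.1 x).hasDerivAt).hasDerivWithinAt)
      (fun x hx => by
        have hxt : |x| ≤ |t| := by
          rcases Set.mem_uIcc.mp hx with h | h <;> rw [abs_le] <;>
            constructor <;> cases abs_le.mp (le_refl |t|) <;> nlinarith [le_abs_self t, neg_abs_le t]
        have : |x| ≤ δ / 2 := le_trans hxt ht
        calc ‖deriv (deriv u) x‖ ≤ ((K:ℝ)+1) * |x| := hbd2 x this
          _ ≤ ((K:ℝ)+1) * |t| := by gcongr)
      (convex_uIcc 0 t) Set.left_mem_uIcc Set.right_mem_uIcc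
    simp only [h1, sub_zero, Real.norm_eq_abs] at this
    calc |deriv u t| ≤ ((K:ℝ)+1) * |t| * |t| := this
      _ = ((K:ℝ)+1) * |t| ^ 2 := by ring
  intro t ht
  have := Convex.norm_image_sub_le_of_norm_hasDerivWithin_le
    (f := u) (f' := deriv u) (s := Set.uIcc 0 t) (C := ((K:ℝ)+1) * |t| ^ 2)
    (fun x _ => ((hu1.1 x).hasDerivAt).hasDerivWithinAt)
    (fun x hx => by
      have hxt : |x| ≤ |t| := by
        rcases Set.mem_uIcc.mp hx with h | h <;> rw [abs_le] <;>
          constructor <;> nlinarith [le_abs_self t, neg_abs_le t]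
      have : |x| ≤ δ / 2 := le_trans hxt ht
      calc ‖deriv u x‖ ≤ ((K:ℝ)+1) * |x| ^ 2 := hbd1 x this
        _ ≤ ((K:ℝ)+1) * |t| ^ 2 := by gcongr)
    (convex_uIcc 0 t) Set.left_mem_uIcc Set.right_mem_uIcc
  simp only [h0, sub_zero, Real.norm_eq_abs] at this
  calc |u t| ≤ ((K:ℝ)+1) * |t| ^ 2 * |t| := this
    _ = ((K:ℝ)+1) * |t| ^ 3 := by ring

lemma deriv_along {E : Type*} [NormedAddCommGroup E] [NormedSpace ℝ E]
    {φ : E → ℝ} (hφ : ContDiff ℝ 3 φ) (v : E) :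
    (deriv (fun t : ℝ => φ (t • v)) = fun t => fderiv ℝ φ (t • v) v) ∧
    deriv (deriv (fun t : ℝ => φ (t • v))) 0 = fderiv ℝ (fderiv ℝ φ) 0 v v := by
  have hc : ∀ t : ℝ, HasDerivAt (fun t : ℝ => t • v) v t := by
    intro t
    simpa using (hasDerivAt_id t).smul_const v
  have hd1 : ∀ t : ℝ, HasDerivAt (fun t : ℝ => φ (t • v)) (fderiv ℝ φ (t • v) v) t := by
    intro t
    exact ((hφ.differentiable (by norm_num) (t • v)).hasFDerivAt).comp_hasDerivAt t (hc t)
  have hderiv : deriv (fun t : ℝ => φ (t • v)) = fun t => fderiv ℝ φ (t • v) v :=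
    funext fun t => (hd1 t).deriv
  refine ⟨hderiv, ?_⟩
  rw [hderiv]
  have hA : ContDiff ℝ 2 (fderiv ℝ φ) :=
    (contDiff_succ_iff_fderiv.mp (by norm_num at hφ ⊢; exact hφ)).2.2
  have hA0 : HasFDerivAt (fderiv ℝ φ) (fderiv ℝ (fderiv ℝ φ) 0) ((0:ℝ) • v) := by
    rw [zero_smul]
    exact (hA.differentiable (by norm_num) 0).hasFDerivAt
  have hcomp : HasDerivAt (fun t : ℝ => fderiv ℝ φ (t • v)) (fderiv ℝ (fderiv ℝ φ) 0 v) 0 :=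
    hA0.comp_hasDerivAt 0 (hc 0)
  have happ : HasDerivAt (fun t : ℝ => fderiv ℝ φ (t • v) v)
      ((fderiv ℝ (fderiv ℝ φ) 0 v) v) 0 :=
    ((ContinuousLinearMap.apply ℝ ℝ v).hasFDerivAt).comp_hasDerivAt 0 hcomp
  exact happ.deriv

lemma euclidean_eq_sum {n : ℕ} (x : EuclideanSpace ℝ (Fin n)) :
    x = ∑ α, x α • EuclideanSpace.single α (1:ℝ) := by
  ext j
  have : (∑ α, x α • EuclideanSpace.single α (1:ℝ)) j
      = ∑ α, (x α • EuclideanSpace.single α (1:ℝ)) j :=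
    by simp only [WithLp.ofLp_sum, Finset.sum_apply]
  rw [this]
  simp [EuclideanSpace.single_apply]

lemma bilinear_expand {n : ℕ}
    (B : EuclideanSpace ℝ (Fin n) →L[ℝ] EuclideanSpace ℝ (Fin n) →L[ℝ] ℝ)
    (x : EuclideanSpace ℝ (Fin n)) :
    B x x = ∑ α, ∑ β,
      (B (EuclideanSpace.single α 1) (EuclideanSpace.single β 1)) * x α * x β := by
  nth_rewrite 1 [euclidean_eq_sum x]
  rw [map_sum, ContinuousLinearMap.sum_apply]
  refine Finset.sum_congr rfl fun α _ => ?_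
  rw [map_smul, ContinuousLinearMap.smul_apply]
  nth_rewrite 2 [euclidean_eq_sum x]
  rw [map_sum, Finset.smul_sum]
  refine Finset.sum_congr rfl fun β _ => ?_
  rw [map_smul]
  simp only [smul_eq_mul]
  ring

lemma term_bound {a q c t : ℝ} (hc : 0 ≤ c) (hw : |a - q / 2 * t ^ 2| ≤ c * |t| ^ 3)
    (ht : |t| ≤ 1) :
    |a ^ 2 - q ^ 2 / 4 * t ^ 4| ≤ (c ^ 2 + c * |q|) * |t| ^ 5 := by
  set w := a - q / 2 * t ^ 2 with hwdef
  have ha : a ^ 2 - q ^ 2 / 4 * t ^ 4 = w ^ 2 + w * (q * t ^ 2) := by rw [hwdef]; ring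
  rw [ha]
  have habs : |w ^ 2 + w * (q * t ^ 2)| ≤ |w| ^ 2 + |w| * (|q| * t ^ 2) := by
    calc |w ^ 2 + w * (q * t ^ 2)| ≤ |w ^ 2| + |w * (q * t ^ 2)| := abs_add_le _ _
      _ = |w| ^ 2 + |w| * (|q| * t ^ 2) := by
          rw [abs_pow, abs_mul, abs_mul, abs_of_nonneg (sq_nonneg t)]
  have h2 : |w| * |w| ≤ (c * |t| ^ 3) * (c * |t| ^ 3) :=
    mul_self_le_mul_self (abs_nonneg w) hw
  have h3 : |t| ^ 6 ≤ |t| ^ 5 := pow_le_pow_of_le_one (abs_nonneg t) ht (by norm_num)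
  have h4 : |w| * (|q| * t ^ 2) ≤ (c * |t| ^ 3) * (|q| * t ^ 2) :=
    mul_le_mul_of_nonneg_right hw (by positivity)
  have ht2 : t ^ 2 = |t| ^ 2 := (sq_abs t).symm
  have e1 : (c * |t| ^ 3) * (c * |t| ^ 3) = c ^ 2 * |t| ^ 6 := by ring
  have e2 : (c * |t| ^ 3) * (|q| * |t| ^ 2) = c * |q| * |t| ^ 5 := by ring
  have hq : 0 ≤ |q| := abs_nonneg q
  have k1 : |w| ^ 2 ≤ c ^ 2 * |t| ^ 6 := by
    rw [sq]
    calc |w| * |w| ≤ c * |t| ^ 3 * (c * |t| ^ 3) := h2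
      _ = c ^ 2 * |t| ^ 6 := by ring
  have k1' : |w| ^ 2 ≤ c ^ 2 * |t| ^ 5 :=
    le_trans k1 (mul_le_mul_of_nonneg_left h3 (by positivity))
  have k2 : |w| * (|q| * t ^ 2) ≤ c * |q| * |t| ^ 5 := by
    calc |w| * (|q| * t ^ 2) ≤ c * |t| ^ 3 * (|q| * t ^ 2) := h4
      _ = c * |q| * |t| ^ 5 := by rw [ht2]; ring
  calc |w ^ 2 + w * (q * t ^ 2)| ≤ |w| ^ 2 + |w| * (|q| * t ^ 2) := habs
    _ ≤ c ^ 2 * |t| ^ 5 + c * |q| * |t| ^ 5 := add_le_add k1' k2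
    _ = (c ^ 2 + c * |q|) * |t| ^ 5 := by ring

set_option maxHeartbeats 4000000 in
/-- Radial parametrization of the boundary of the spherical component of a graph
manifold: for each unit tangent direction `x̄ ∈ S^{n-1} ⊂ T_pM`, there is a radial
function `r(ε)` with `r(ε)² + Σ_i f^i(r(ε)x̄)² = ε²` (the defining equation of
`M ∩ S^n_p(ε)`) and `r(ε) = ε − (K(x̄)²/8) ε³ + O(ε⁴)`, where
`K(x̄)² = Σ_i (Σ_{α,β} κ^i_{αβ} x̄^α x̄^β)²  (= ‖II(x̄,x̄)‖²)`. -/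
theorem spherical_boundary_radial_equation (n k : ℕ)
    (f : EuclideanSpace ℝ (Fin n) → EuclideanSpace ℝ (Fin k))
    (hf : ContDiff ℝ 3 f) (hf0 : f 0 = 0) (hdf0 : fderiv ℝ f 0 = 0)
    (κ : Fin k → Fin n → Fin n → ℝ)
    (hκ : ∀ j α β, κ j α β = iteratedFDeriv ℝ 2 (fun x => f x j) 0
      ![EuclideanSpace.single α 1, EuclideanSpace.single β 1])
    (xbar : EuclideanSpace ℝ (Fin n)) (hxbar : ‖xbar‖ = 1)
    (K2 : ℝ) (hK2 : K2 = ∑ i, (∑ α, ∑ β, κ i α β * xbar α * xbar β) ^ 2) :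
    ∃ r : ℝ → ℝ,
      (∀ᶠ ε in nhdsWithin 0 (Set.Ioi 0),
        r ε ^ 2 + ∑ i, (f (r ε • xbar) i) ^ 2 = ε ^ 2) ∧
      (fun ε => r ε - (ε - K2 / 8 * ε ^ 3)) =O[nhdsWithin 0 (Set.Ioi 0)]
        fun ε => ε ^ 4 := by
  -- coordinate functions
  have hfi : ∀ i : Fin k, ContDiff ℝ 3 (fun x => f x i) := fun i =>
    (EuclideanSpace.proj (𝕜 := ℝ) i).contDiff.comp hf
  -- the directional functions
  have hgc : ∀ i : Fin k, ContDiff ℝ 3 (fun t : ℝ => f (t • xbar) i) := fun i =>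
    (hfi i).comp (contDiff_id.smul contDiff_const)
  set Q : Fin k → ℝ := fun i => fderiv ℝ (fderiv ℝ (fun x => f x i)) 0 xbar xbar with hQdef
  -- κ in terms of second fderiv
  have hκ' : ∀ i α β, κ i α β =
      fderiv ℝ (fderiv ℝ (fun x => f x i)) 0 (EuclideanSpace.single α 1)
        (EuclideanSpace.single β 1) := by
    intro i α β
    rw [hκ i α β, iteratedFDeriv_two_apply]
    simp
  have hQsum : ∀ i, Q i = ∑ α, ∑ β, κ i α β * xbar α * xbar β := by
    intro i
    show fderiv ℝ (fderiv ℝ (fun x => f x i)) 0 xbar xbar = _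
    rw [bilinear_expand (fderiv ℝ (fderiv ℝ (fun x => f x i)) 0) xbar]
    exact Finset.sum_congr rfl fun α _ => Finset.sum_congr rfl fun β _ => by
      rw [hκ' i α β]
  have hK2Q : K2 = ∑ i, Q i ^ 2 := by
    rw [hK2]
    exact Finset.sum_congr rfl fun i _ => by rw [hQsum i]
  have hK2nn : 0 ≤ K2 := by rw [hK2Q]; positivity
  -- g i 0 = 0
  have hg0 : ∀ i : Fin k, f ((0:ℝ) • xbar) i = 0 := by
    intro i; rw [zero_smul, hf0]; rfl
  -- fderiv of coordinate at 0 is 0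
  have hdfi0 : ∀ i : Fin k, fderiv ℝ (fun x => f x i) 0 = 0 := by
    intro i
    have h1 : HasFDerivAt f (0 : EuclideanSpace ℝ (Fin n) →L[ℝ] EuclideanSpace ℝ (Fin k)) 0 := by
      have := (hf.differentiable (by norm_num) 0).hasFDerivAt
      rwa [hdf0] at this
    have h2 : HasFDerivAt (fun x => f x i)
        ((EuclideanSpace.proj (𝕜 := ℝ) i).comp
          (0 : EuclideanSpace ℝ (Fin n) →L[ℝ] EuclideanSpace ℝ (Fin k))) 0 :=
      (EuclideanSpace.proj (𝕜 := ℝ) i).hasFDerivAt.comp 0 h1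
    rw [h2.fderiv]
    ext v
    simp
  -- deriv facts for g i
  have hDA := fun i : Fin k => deriv_along (hfi i) xbar
  have hgd0 : ∀ i : Fin k, deriv (fun t : ℝ => f (t • xbar) i) 0 = 0 := by
    intro i
    rw [(hDA i).1]
    show fderiv ℝ (fun x => f x i) ((0:ℝ) • xbar) xbar = 0
    rw [zero_smul, hdfi0 i]
    rfl
  have hgd2 : ∀ i : Fin k, deriv (deriv (fun t : ℝ => f (t • xbar) i)) 0 = Q i := fun i => (hDA i).2
  -- the remainder functions u i and their cube bounds
  have hcube : ∀ i : Fin k, ∃ C > 0, ∀ᶠ t in nhds (0:ℝ),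
      |f (t • xbar) i - Q i / 2 * t ^ 2| ≤ C * |t| ^ 3 := by
    intro i
    set u : ℝ → ℝ := fun t => f (t • xbar) i - Q i / 2 * t ^ 2 with hudef
    have hupoly : ContDiff ℝ 3 (fun t : ℝ => Q i / 2 * t ^ 2) :=
      contDiff_const.mul (contDiff_id.pow 2)
    have huc : ContDiff ℝ 3 u := (hgc i).sub hupoly
    -- derivative of u
    have hpolyd : ∀ t : ℝ, HasDerivAt (fun s : ℝ => Q i / 2 * s ^ 2) (Q i * t) t := by
      intro t
      have := (hasDerivAt_pow 2 t).const_mul (Q i / 2)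
      refine this.congr_deriv ?_
      ring
    have hgd : ∀ t : ℝ, HasDerivAt (fun s : ℝ => f (s • xbar) i)
        (deriv (fun s : ℝ => f (s • xbar) i) t) t := fun t =>
      ((hgc i).differentiable (by norm_num) t).hasDerivAt
    have hud : deriv u = fun t => deriv (fun s : ℝ => f (s • xbar) i) t - Q i * t :=
      funext fun t => ((hgd t).sub (hpolyd t)).deriv
    have hu0 : u 0 = 0 := by
      have := hg0 i
      simp only [hudef]
      rw [this]
      norm_num
    have hu1 : deriv u 0 = 0 := by rw [hud]; simp [hgd0 i]
    have hu2 : deriv (deriv u) 0 = 0 := by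
      rw [hud]
      have hgder : ContDiff ℝ 2 (deriv (fun s : ℝ => f (s • xbar) i)) := by
        have h3 : (3 : WithTop ℕ∞) = 2 + 1 := by norm_num
        have := hgc i
        rw [h3, contDiff_succ_iff_deriv] at this
        exact this.2.2
      have hg2 : HasDerivAt (deriv (fun s : ℝ => f (s • xbar) i))
          (deriv (deriv (fun s : ℝ => f (s • xbar) i)) 0) 0 :=
        (hgder.differentiable (by norm_num) 0).hasDerivAt
      have hlin : HasDerivAt (fun t : ℝ => Q i * t) (Q i) 0 := by
        simpa using (hasDerivAt_id (0:ℝ)).const_mul (Q i)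
      have := (hg2.sub hlin).deriv
      refine this.trans ?_
      rw [hgd2 i]
      ring
    obtain ⟨C, hC, δ, hδ, hb⟩ := cube_bound huc hu0 hu1 hu2
    refine ⟨C, hC, Metric.eventually_nhds_iff.2 ⟨δ, hδ, fun {t} ht => ?_⟩⟩
    have : |t| ≤ δ := by rw [Real.dist_eq, sub_zero] at ht; exact ht.le
    exact hb t this
  choose C hCpos hev using hcube
  have hall : ∀ᶠ t in nhds (0:ℝ),
      (∀ i, |f (t • xbar) i - Q i / 2 * t ^ 2| ≤ C i * |t| ^ 3) ∧ |t| ≤ 1 :=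
    (eventually_all.2 hev).and (Metric.eventually_nhds_iff.2
      ⟨1, one_pos, fun {t} ht => by rw [Real.dist_eq, sub_zero] at ht; exact ht.le⟩)
  obtain ⟨δ, hδpos, hδ⟩ := Metric.eventually_nhds_iff.mp hall
  set C₀ : ℝ := ∑ i, (C i ^ 2 + C i * |Q i|) with hC₀def
  clear_value C₀
  have hC₀nn : 0 ≤ C₀ := by
    rw [hC₀def]
    exact Finset.sum_nonneg fun i _ =>
      add_nonneg (sq_nonneg _) (mul_nonneg (hCpos i).le (abs_nonneg _))
  -- key estimate on h t := ∑ i, (f (t • xbar) i)^2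
  have hH : ∀ t : ℝ, dist t 0 < δ →
      |(∑ i, (f (t • xbar) i) ^ 2) - K2 / 4 * t ^ 4| ≤ C₀ * |t| ^ 5 := by
    intro t htd
    obtain ⟨hui, ht1⟩ := hδ htd
    have hsplit : (∑ i, (f (t • xbar) i) ^ 2) - K2 / 4 * t ^ 4
        = ∑ i, ((f (t • xbar) i) ^ 2 - Q i ^ 2 / 4 * t ^ 4) := by
      rw [hK2Q, Finset.sum_sub_distrib]
      congr 1
      rw [Finset.sum_div, Finset.sum_mul]
    rw [hsplit]
    calc |∑ i, ((f (t • xbar) i) ^ 2 - Q i ^ 2 / 4 * t ^ 4)|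
        ≤ ∑ i, |(f (t • xbar) i) ^ 2 - Q i ^ 2 / 4 * t ^ 4| :=
          Finset.abs_sum_le_sum_abs _ _
      _ ≤ ∑ i, (C i ^ 2 + C i * |Q i|) * |t| ^ 5 :=
          Finset.sum_le_sum fun i _ => term_bound (hCpos i).le (hui i) ht1
      _ = C₀ * |t| ^ 5 := by rw [hC₀def, Finset.sum_mul]
  -- nonnegativity and value at 0
  have hhpos : ∀ t : ℝ, 0 ≤ ∑ i, (f (t • xbar) i) ^ 2 := fun t =>
    Finset.sum_nonneg fun i _ => sq_nonneg _
  have hh0 : (∑ i, (f ((0:ℝ) • xbar) i) ^ 2) = 0 := by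
    refine Finset.sum_eq_zero fun i _ => ?_
    rw [hg0 i]
    norm_num
  have hhcont : Continuous fun t : ℝ => ∑ i, (f (t • xbar) i) ^ 2 :=
    continuous_finset_sum _ fun i _ => ((hgc i).continuous).pow 2
  -- existence of the radial solution
  have hex : ∀ ε : ℝ, 0 < ε → ∃ t ∈ Set.Icc 0 ε,
      t ^ 2 + ∑ i, (f (t • xbar) i) ^ 2 = ε ^ 2 := by
    intro ε hε
    have hcont : ContinuousOn (fun t => t ^ 2 + ∑ i, (f (t • xbar) i) ^ 2) (Set.Icc 0 ε) :=
      ((continuous_pow 2).add hhcont).continuousOn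
    have hmem : ε ^ 2 ∈ Set.Icc ((fun t => t ^ 2 + ∑ i, (f (t • xbar) i) ^ 2) 0)
        ((fun t => t ^ 2 + ∑ i, (f (t • xbar) i) ^ 2) ε) := by
      constructor
      · show (0:ℝ) ^ 2 + ∑ i, (f ((0:ℝ) • xbar) i) ^ 2 ≤ ε ^ 2
        rw [hh0]
        nlinarith [sq_nonneg ε]
      · show ε ^ 2 ≤ ε ^ 2 + ∑ i, (f (ε • xbar) i) ^ 2
        nlinarith [hhpos ε]
    obtain ⟨t, ht, htv⟩ := intermediate_value_Icc hε.le hcont hmem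
    exact ⟨t, ht, htv⟩
  classical
  set r : ℝ → ℝ := fun ε => if hε : 0 < ε then (hex ε hε).choose else 0 with hrdef
  have hrspec : ∀ ε : ℝ, 0 < ε → r ε ∈ Set.Icc 0 ε ∧
      r ε ^ 2 + ∑ i, (f (r ε • xbar) i) ^ 2 = ε ^ 2 := by
    intro ε hε
    have : r ε = (hex ε hε).choose := by rw [hrdef]; simp only [dif_pos hε]
    rw [this]
    exact ⟨(hex ε hε).choose_spec.1, (hex ε hε).choose_spec.2⟩
  clear_value r
  refine ⟨r, ?_, ?_⟩
  · filter_upwards [self_mem_nhdsWithin] with ε hε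
    exact (hrspec ε hε).2
  · rw [isBigO_iff]
    set C₁ : ℝ := K2 / 4 + C₀ with hC₁def
    clear_value C₁
    have hC₁nn : 0 ≤ C₁ := by rw [hC₁def]; positivity
    set C₂ : ℝ := C₀ + 7 * K2 * C₁ / 8 with hC₂def
    clear_value C₂
    have hC₂nn : 0 ≤ C₂ := by rw [hC₂def]; positivity
    refine ⟨C₂, ?_⟩
    have hmem : Set.Ioc 0 (min (δ / 2) 1) ∈ nhdsWithin (0:ℝ) (Set.Ioi 0) :=
      Ioc_mem_nhdsGT_of_mem ⟨le_refl 0, lt_min (by positivity) one_pos⟩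
    filter_upwards [hmem] with ε hε
    obtain ⟨hε0, hεδ⟩ := hε
    have hε1 : ε ≤ 1 := le_trans hεδ (min_le_right _ _)
    have hεδ2 : ε ≤ δ / 2 := le_trans hεδ (min_le_left _ _)
    obtain ⟨⟨hs0, hsε⟩, heq⟩ := hrspec ε hε0
    set s : ℝ := r ε with hsdef
    clear_value s
    have hsδ : dist s 0 < δ := by
      rw [Real.dist_eq, sub_zero, abs_of_nonneg hs0]
      linarith
    have hhb := hH s hsδ
    rw [abs_of_nonneg hs0] at hhb
    have hhnn' := hhpos s
    set h : ℝ := ∑ i, (f (s • xbar) i) ^ 2 with hhdef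
    clear_value h
    have hhnn : 0 ≤ h := hhnn'
    -- powers of s vs ε
    have hs4 : s ^ 4 ≤ ε ^ 4 := pow_le_pow_left₀ hs0 hsε 4
    have hs5 : s ^ 5 ≤ ε ^ 5 := pow_le_pow_left₀ hs0 hsε 5
    have hε54 : ε ^ 5 ≤ ε ^ 4 := pow_le_pow_of_le_one hε0.le hε1 (by norm_num)
    have hε65 : ε ^ 6 ≤ ε ^ 5 := pow_le_pow_of_le_one hε0.le hε1 (by norm_num)
    have habs := abs_le.mp hhb
    -- step C : ε - s ≤ C₁ * ε^3
    have hub : h ≤ C₁ * ε ^ 4 := by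
      have : h ≤ K2 / 4 * s ^ 4 + C₀ * s ^ 5 := by linarith [habs.2]
      calc h ≤ K2 / 4 * s ^ 4 + C₀ * s ^ 5 := this
        _ ≤ K2 / 4 * ε ^ 4 + C₀ * ε ^ 5 := by
            have := mul_le_mul_of_nonneg_left hs4 (by linarith : (0:ℝ) ≤ K2 / 4)
            have := mul_le_mul_of_nonneg_left hs5 hC₀nn
            linarith
        _ ≤ K2 / 4 * ε ^ 4 + C₀ * ε ^ 4 := by
            have := mul_le_mul_of_nonneg_left hε54 hC₀nn
            linarith
        _ = C₁ * ε ^ 4 := by rw [hC₁def]; ring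
    have hεs : 0 < ε + s := by linarith
    have hstepC : ε - s ≤ C₁ * ε ^ 3 := by
      have h1 : (ε - s) * (ε + s) = h := by nlinarith [heq]
      have h2 : (ε - s) * (ε + s) ≤ (C₁ * ε ^ 3) * (ε + s) := by
        rw [h1]
        calc h ≤ C₁ * ε ^ 4 := hub
          _ = (C₁ * ε ^ 3) * ε := by ring
          _ ≤ (C₁ * ε ^ 3) * (ε + s) := by
              have : (0:ℝ) ≤ C₁ * ε ^ 3 := by positivity
              nlinarith
      exact le_of_mul_le_mul_right h2 hεs
    have hsle : s ≤ ε := hsε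
    -- the key identity
    have hTid : (s - (ε - K2 / 8 * ε ^ 3)) * (ε + s)
        = (K2 / 4 * s ^ 4 - h) + K2 / 8 * (ε ^ 4 + ε ^ 3 * s - 2 * s ^ 4) := by
      have h' : h = ε ^ 2 - s ^ 2 := by linarith [heq]
      rw [h']
      ring
    -- bound the factored polynomial
    have hpoly : |ε ^ 4 + ε ^ 3 * s - 2 * s ^ 4| ≤ (C₁ * ε ^ 3) * (7 * ε ^ 3) := by
      have hfac : ε ^ 4 + ε ^ 3 * s - 2 * s ^ 4
          = (ε - s) * (2 * s ^ 3 + 2 * ε * s ^ 2 + 2 * ε ^ 2 * s + ε ^ 3) := by ring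
      rw [hfac, abs_mul]
      have h1 : |ε - s| ≤ C₁ * ε ^ 3 := by
        rw [abs_of_nonneg (by linarith)]
        exact hstepC
      have hs3 : s ^ 3 ≤ ε ^ 3 := pow_le_pow_left₀ hs0 hsε 3
      have hs2 : s ^ 2 ≤ ε ^ 2 := pow_le_pow_left₀ hs0 hsε 2
      have h2 : |2 * s ^ 3 + 2 * ε * s ^ 2 + 2 * ε ^ 2 * s + ε ^ 3| ≤ 7 * ε ^ 3 := by
        rw [abs_of_nonneg (by positivity)]
        nlinarith [mul_le_mul_of_nonneg_left hs2 hε0.le,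
          mul_le_mul_of_nonneg_left hsε (sq_nonneg ε)]
      exact mul_le_mul h1 h2 (abs_nonneg _) (by positivity)
    -- bound the numerator
    have hN : |(K2 / 4 * s ^ 4 - h) + K2 / 8 * (ε ^ 4 + ε ^ 3 * s - 2 * s ^ 4)| ≤ C₂ * ε ^ 5 := by
      have hA : |K2 / 4 * s ^ 4 - h| ≤ C₀ * ε ^ 5 := by
        rw [abs_sub_comm]
        calc |h - K2 / 4 * s ^ 4| ≤ C₀ * s ^ 5 := hhb
          _ ≤ C₀ * ε ^ 5 := mul_le_mul_of_nonneg_left hs5 hC₀nn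
      have hB : |K2 / 8 * (ε ^ 4 + ε ^ 3 * s - 2 * s ^ 4)| ≤ K2 / 8 * ((C₁ * ε ^ 3) * (7 * ε ^ 3)) := by
        rw [abs_mul, abs_of_nonneg (by linarith : (0:ℝ) ≤ K2 / 8)]
        exact mul_le_mul_of_nonneg_left hpoly (by linarith)
      have hB' : K2 / 8 * ((C₁ * ε ^ 3) * (7 * ε ^ 3)) = (7 * K2 * C₁ / 8) * ε ^ 6 := by ring
      calc |(K2 / 4 * s ^ 4 - h) + K2 / 8 * (ε ^ 4 + ε ^ 3 * s - 2 * s ^ 4)|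
          ≤ |K2 / 4 * s ^ 4 - h| + |K2 / 8 * (ε ^ 4 + ε ^ 3 * s - 2 * s ^ 4)| := abs_add_le _ _
        _ ≤ C₀ * ε ^ 5 + (7 * K2 * C₁ / 8) * ε ^ 6 := by rw [hB'] at hB; linarith
        _ ≤ C₀ * ε ^ 5 + (7 * K2 * C₁ / 8) * ε ^ 5 := by
            have : (0:ℝ) ≤ 7 * K2 * C₁ / 8 := by positivity
            nlinarith [mul_le_mul_of_nonneg_left hε65 this]
        _ = C₂ * ε ^ 5 := by rw [hC₂def]; ring
    -- conclude
    have hTbound : |s - (ε - K2 / 8 * ε ^ 3)| * (ε + s) ≤ (C₂ * ε ^ 4) * (ε + s) := by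
      have h1 : |s - (ε - K2 / 8 * ε ^ 3)| * (ε + s)
          = |(s - (ε - K2 / 8 * ε ^ 3)) * (ε + s)| := by
        rw [abs_mul, abs_of_nonneg hεs.le]
      rw [h1, hTid]
      calc |(K2 / 4 * s ^ 4 - h) + K2 / 8 * (ε ^ 4 + ε ^ 3 * s - 2 * s ^ 4)|
          ≤ C₂ * ε ^ 5 := hN
        _ = (C₂ * ε ^ 4) * ε := by ring
        _ ≤ (C₂ * ε ^ 4) * (ε + s) := by
            have : (0:ℝ) ≤ C₂ * ε ^ 4 := by positivity
            nlinarith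
    have hfinal : |s - (ε - K2 / 8 * ε ^ 3)| ≤ C₂ * ε ^ 4 :=
      le_of_mul_le_mul_right hTbound hεs
    rw [Real.norm_eq_abs, Real.norm_eq_abs]
    calc |s - (ε - K2 / 8 * ε ^ 3)| ≤ C₂ * ε ^ 4 := hfinal
      _ = C₂ * |ε ^ 4| := by rw [abs_of_nonneg (by positivity)]
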